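/- (Relative error of the state-dependent gradient) Suppose f_{x̄} is α-strongly convex for some α > 0 and x̄ minimizes f_{x̄} over E (so ∇f_{x̄}(x̄) = 0). Then for every x ∈ E, ‖∇f_x(x) − ∇f_{x̄}(x)‖ ≤ (γβ/α)·‖∇f_{x̄}(x)‖. -/

import Mathlib

open MeasureTheory Set

noncomputable section

set_option maxHeartbeats 1000000 in
/-- **Contraction of repeated minimization toward equilibrium.** If `f_{xbar}` is `α`-strongly
convex, then any minimizer `xp` of `f_x + r` satisfies `‖xp − xbar‖ ≤ (γβ/α)‖x − xbar‖`. -/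
theorem repeated_minimization_contraction
    {E : Type*} [NormedAddCommGroup E] [InnerProductSpace ℝ E] [FiniteDimensional ℝ E]
    {Z : Type*} [MetricSpace Z] [MeasurableSpace Z] [BorelSpace Z]
    (ℓ : E → Z → ℝ) (G : E → Z → E) (β γ : ℝ) (hβ : 0 ≤ β) (hγ : 0 ≤ γ)
    (hgrad : ∀ (x : E) (z : Z), HasGradientAt (fun x' => ℓ x' z) (G x z) x)
    (hlip : ∀ (x : E) (z z' : Z), ‖G x z - G x z'‖ ≤ β * dist z z')
    (D : E → Measure Z) (hD : ∀ x : E, IsProbabilityMeasure (D x))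
    (hint : ∀ x y : E, Integrable (fun z => ℓ y z) (D x))
    (hintG : ∀ x y : E, Integrable (fun z => G y z) (D x))
    (f : E → E → ℝ) (Gf : E → E → E)
    (hfdef : ∀ x y : E, f x y = ∫ z, ℓ y z ∂(D x))
    (hGfdef : ∀ x y : E, Gf x y = ∫ z, G y z ∂(D x))
    (hfgrad : ∀ x y : E, HasGradientAt (f x) (Gf x y) y)
    (hDlip : ∀ x y : E, ∀ g : Z → ℝ, LipschitzWith 1 g →
      |(∫ z, g z ∂(D x)) - ∫ z, g z ∂(D y)| ≤ γ * ‖x - y‖)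
    (xbar : E) (hxbar : ∀ y : E, f xbar xbar ≤ f xbar y)
    (α : ℝ) (hα : 0 < α)
    (hsc : ConvexOn ℝ univ (fun y => f xbar y - α / 2 * ‖y‖ ^ 2))
    (x : E) :
    ‖Gf x x - Gf xbar x‖ ≤ (γ * β / α) * ‖Gf xbar x‖ := by
  have hnZ : Nonempty Z := by
    by_contra h
    have huniv : (univ : Set Z) = ∅ := by
      exact Set.eq_empty_iff_forall_notMem.mpr fun z _ => h ⟨z⟩
    have h1 : (D x) univ = 1 := (hD x).measure_univ
    rw [huniv, measure_empty] at h1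
    exact zero_ne_one h1
  -- Step A: the gradient of `f xbar` at `xbar` vanishes
  have hloc : IsLocalMin (f xbar) xbar := Filter.Eventually.of_forall hxbar
  have h0' : (InnerProductSpace.toDual ℝ E) (Gf xbar xbar) = 0 :=
    hloc.hasFDerivAt_eq_zero (hasGradientAt_iff_hasFDerivAt.mp (hfgrad xbar xbar))
  have h0 : Gf xbar xbar = 0 := by
    exact (InnerProductSpace.toDual ℝ E).injective (by simp [h0'])
  -- Step B: strong convexity gives `α‖x-xbar‖² ≤ ⟪Gf xbar x, x - xbar⟫`
  set L : ℝ → E := fun s => s • (x - xbar) + xbar with hLdef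
  have hLd : ∀ t : ℝ, HasDerivAt L (x - xbar) t := by
    intro t
    have := ((hasDerivAt_id t).smul_const (x - xbar)).add_const xbar
    simpa [hLdef] using this
  have hL0 : L 0 = xbar := by simp [hLdef]
  have hL1 : L 1 = x := by simp [hLdef]
  have hder : ∀ t : ℝ, HasDerivAt (fun s => f xbar (L s) - α / 2 * ‖L s‖ ^ 2)
      ((inner ℝ (Gf xbar (L t)) (x - xbar) : ℝ)
        - α / 2 * (2 * (inner ℝ (L t) (x - xbar) : ℝ))) t := by
    intro t
    have hF := hasGradientAt_iff_hasFDerivAt.mp (hfgrad xbar (L t))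
    have h1 : HasDerivAt (fun s => f xbar (L s))
        ((inner ℝ (Gf xbar (L t)) (x - xbar) : ℝ)) t := by
      have := hF.comp_hasDerivAt t (hLd t)
      simp only [InnerProductSpace.toDual_apply_apply] at this; exact this
    have h2 : HasDerivAt (fun s => α / 2 * ‖L s‖ ^ 2)
        (α / 2 * (2 * (inner ℝ (L t) (x - xbar) : ℝ))) t :=
      ((hLd t).norm_sq).const_mul (α / 2)
    exact h1.sub h2
  have hconv : ConvexOn ℝ univ (fun s : ℝ => f xbar (L s) - α / 2 * ‖L s‖ ^ 2) := by
    have := hsc.comp_affineMap (AffineMap.lineMap xbar x : ℝ →ᵃ[ℝ] E)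
    have heqf : ((fun y => f xbar y - α / 2 * ‖y‖ ^ 2) ∘ (AffineMap.lineMap xbar x))
        = fun s : ℝ => f xbar (L s) - α / 2 * ‖L s‖ ^ 2 := by
      funext s
      simp [Function.comp, AffineMap.lineMap_apply, hLdef]
    rw [heqf] at this
    simpa using this
  have hmono :
      (inner ℝ (Gf xbar (L 0)) (x - xbar) : ℝ) - α / 2 * (2 * (inner ℝ (L 0) (x - xbar) : ℝ))
        ≤ (inner ℝ (Gf xbar (L 1)) (x - xbar) : ℝ)
          - α / 2 * (2 * (inner ℝ (L 1) (x - xbar) : ℝ)) := by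
    have ha := hconv.le_slope_of_hasDerivAt (mem_univ (0 : ℝ)) (mem_univ (1 : ℝ))
      zero_lt_one (hder 0)
    have hb := hconv.slope_le_of_hasDerivAt (mem_univ (0 : ℝ)) (mem_univ (1 : ℝ))
      zero_lt_one (hder 1)
    exact ha.trans hb
  rw [hL0, hL1, h0] at hmono
  have hstrong : α * ‖x - xbar‖ ^ 2 ≤ (inner ℝ (Gf xbar x) (x - xbar) : ℝ) := by
    have hinner : (inner ℝ (x - xbar) (x - xbar) : ℝ)
        = (inner ℝ x (x - xbar) : ℝ) - (inner ℝ xbar (x - xbar) : ℝ) := inner_sub_left _ _ _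
    have hns : (inner ℝ (x - xbar) (x - xbar) : ℝ) = ‖x - xbar‖ ^ 2 :=
      real_inner_self_eq_norm_sq _
    simp only [inner_zero_left] at hmono
    nlinarith [hmono, hinner, hns]
  have hxb : α * ‖x - xbar‖ ≤ ‖Gf xbar x‖ := by
    rcases eq_or_lt_of_le (norm_nonneg (x - xbar)) with hn | hn
    · rw [← hn, mul_zero]; exact norm_nonneg _
    · have hcs : (inner ℝ (Gf xbar x) (x - xbar) : ℝ) ≤ ‖Gf xbar x‖ * ‖x - xbar‖ :=
        real_inner_le_norm _ _
      nlinarith [hstrong, hcs]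
  -- Step C: Kantorovich–Rubinstein bound on the gradient difference
  have key : ∀ u : E, (inner ℝ u (Gf x x - Gf xbar x) : ℝ)
      ≤ γ * (β * ‖u‖) * ‖x - xbar‖ := by
    intro u
    set g : Z → ℝ := fun z => (inner ℝ u (G x z) : ℝ) with hg
    have hglip : ∀ z z', |g z - g z'| ≤ (β * ‖u‖) * dist z z' := by
      intro z z'
      have h1 : g z - g z' = (inner ℝ u (G x z - G x z') : ℝ) := by
        rw [hg]; simp [inner_sub_right]
      rw [h1]
      calc |(inner ℝ u (G x z - G x z') : ℝ)| ≤ ‖u‖ * ‖G x z - G x z'‖ :=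
            abs_real_inner_le_norm _ _
        _ ≤ ‖u‖ * (β * dist z z') :=
            mul_le_mul_of_nonneg_left (hlip x z z') (norm_nonneg u)
        _ = (β * ‖u‖) * dist z z' := by ring
    have heq : (inner ℝ u (Gf x x - Gf xbar x) : ℝ)
        = (∫ z, g z ∂(D x)) - ∫ z, g z ∂(D xbar) := by
      rw [inner_sub_right, hGfdef, hGfdef,
        ← integral_inner (hintG x x) u, ← integral_inner (hintG xbar x) u]
    set c : ℝ := β * ‖u‖ with hc
    have hc0 : 0 ≤ c := mul_nonneg hβ (norm_nonneg u)
    rcases eq_or_lt_of_le hc0 with hcz | hcp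
    · -- c = 0 : g is constant, both integrals agree
      obtain ⟨z0⟩ := hnZ
      have hconst : g = fun _ => g z0 := by
        funext z
        have h1 := hglip z z0
        rw [← hcz, zero_mul] at h1
        have h2 : |g z - g z0| = 0 := le_antisymm h1 (abs_nonneg _)
        exact sub_eq_zero.mp (abs_eq_zero.mp h2)
      haveI := hD x; haveI := hD xbar
      rw [heq, hconst]
      simp only [integral_const, measure_univ, ENNReal.toReal_one, one_smul, sub_self]
      rw [← hcz]
      simp
    · -- c > 0 : rescale to a 1-Lipschitz function
      have hlip1 : LipschitzWith 1 (fun z => c⁻¹ * g z) := by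
        apply LipschitzWith.of_dist_le_mul
        intro z z'
        simp only [NNReal.coe_one, one_mul, Real.dist_eq]
        have h1 : c⁻¹ * g z - c⁻¹ * g z' = c⁻¹ * (g z - g z') := by ring
        rw [h1, abs_mul, abs_of_nonneg (inv_nonneg.mpr hc0)]
        calc c⁻¹ * |g z - g z'| ≤ c⁻¹ * (c * dist z z') :=
              mul_le_mul_of_nonneg_left (hglip z z') (inv_nonneg.mpr hc0)
          _ = dist z z' := by rw [← mul_assoc, inv_mul_cancel₀ hcp.ne', one_mul]
      have hKR := hDlip x xbar _ hlip1
      have hint1 : (∫ z, c⁻¹ * g z ∂(D x)) = c⁻¹ * ∫ z, g z ∂(D x) :=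
        integral_const_mul _ _
      have hint2 : (∫ z, c⁻¹ * g z ∂(D xbar)) = c⁻¹ * ∫ z, g z ∂(D xbar) :=
        integral_const_mul _ _
      rw [hint1, hint2] at hKR
      set A : ℝ := (∫ z, g z ∂(D x)) - ∫ z, g z ∂(D xbar) with hA
      have h1 : |c⁻¹ * A| ≤ γ * ‖x - xbar‖ := by
        rw [hA, mul_sub]; exact hKR
      rw [abs_mul, abs_of_nonneg (inv_nonneg.mpr hc0)] at h1
      have h2 : |A| ≤ γ * c * ‖x - xbar‖ := by
        have h3 : |A| = c * (c⁻¹ * |A|) := by field_simp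
        rw [h3]
        calc c * (c⁻¹ * |A|) ≤ c * (γ * ‖x - xbar‖) :=
              mul_le_mul_of_nonneg_left h1 hc0
          _ = γ * c * ‖x - xbar‖ := by ring
      rw [heq]
      exact (le_abs_self A).trans h2
  -- combine
  have hdiff : ‖Gf x x - Gf xbar x‖ ≤ γ * β * ‖x - xbar‖ := by
    have hk := key (Gf x x - Gf xbar x)
    rw [real_inner_self_eq_norm_sq] at hk
    generalize hn' : ‖Gf x x - Gf xbar x‖ = n at *
    generalize hm' : ‖x - xbar‖ = m at *
    have hn0 : 0 ≤ n := hn' ▸ norm_nonneg _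
    rcases eq_or_lt_of_le hn0 with hn | hn
    · rw [← hn]
      have hm0 : 0 ≤ m := hm' ▸ norm_nonneg _
      positivity
    · nlinarith [hk, hn]
  rw [div_mul_eq_mul_div, le_div_iff₀ hα]
  have hγβ : 0 ≤ γ * β := mul_nonneg hγ hβ
  nlinarith [hdiff, hxb, mul_le_mul_of_nonneg_left hxb hγβ,
    mul_le_mul_of_nonneg_right hdiff hα.le]
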